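/- For all integers r ≥ s ≥ 1, the group homomorphisms Sp_{2n}(O) → Sp_{2n}(O/ϖ^r O) and Sp_{2n}(O/ϖ^r O) → Sp_{2n}(O/ϖ^s O) induced by the canonical quotient maps of rings are surjective. -/

import Mathlib

open Matrix

/-- The matrix `J = [[0, I'ₙ],[−I'ₙ, 0]]` where `I'ₙ` is the antidiagonal identity. -/
def Jmat (R : Type*) [CommRing R] (n : ℕ) : Matrix (Fin (2*n)) (Fin (2*n)) R :=
  Matrix.of fun i j =>
    if (i : ℕ) + (j : ℕ) = 2*n - 1 then (if (i : ℕ) < n then (1 : R) else -1) else 0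

/-- The symplectic group `Sp_{2n}(R)` as a set of matrices. -/
def SpSet (n : ℕ) (R : Type*) [CommRing R] : Set (Matrix (Fin (2*n)) (Fin (2*n)) R) :=
  {g | IsUnit g.det ∧ g * Jmat R n * gᵀ = Jmat R n}

/-- The symplectic Lie algebra `sp_{2n}(R)` as a set of matrices. -/
def spSet (n : ℕ) (R : Type*) [CommRing R] : Set (Matrix (Fin (2*n)) (Fin (2*n)) R) :=
  {X | X * Jmat R n + Jmat R n * Xᵀ = 0}

lemma Jmat_map {R S : Type*} [CommRing R] [CommRing S] (f : R →+* S) (n : ℕ) :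
    (Jmat R n).map f = Jmat S n := by
  ext i j
  simp [Jmat, Matrix.map_apply, apply_ite f]

lemma Jmat_transpose (R : Type*) [CommRing R] (n : ℕ) (hn : 1 ≤ n) :
    (Jmat R n)ᵀ = -(Jmat R n) := by
  ext i j
  have hi := i.isLt; have hj := j.isLt
  simp only [transpose_apply, Jmat, of_apply, Matrix.neg_apply]
  split_ifs <;> first | (exfalso; omega) | norm_num

lemma Jmat_mul_Jmat (R : Type*) [CommRing R] (n : ℕ) (hn : 1 ≤ n) :
    Jmat R n * Jmat R n = -1 := by
  ext i k
  have hi := i.isLt; have hk := k.isLt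
  rw [mul_apply]
  rw [Finset.sum_eq_single (⟨2*n-1-(i:ℕ), by omega⟩ : Fin (2*n))]
  · by_cases hik : i = k
    · subst hik
      simp only [Jmat, of_apply, neg_apply, one_apply_eq]
      split_ifs <;> first | (exfalso; omega) | norm_num
    · have hik' : (i:ℕ) ≠ (k:ℕ) := fun h => hik (Fin.ext h)
      rw [neg_apply, one_apply_ne hik]
      simp only [Jmat, of_apply]
      split_ifs <;> first | (exfalso; omega) | norm_num
  · intro b _ hb
    have hb' : (b:ℕ) ≠ 2*n-1-(i:ℕ) := fun h => hb (Fin.ext h)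
    have hbl := b.isLt
    simp only [Jmat, of_apply]
    split_ifs <;> first | (exfalso; omega) | norm_num
  · intro h; exact absurd (Finset.mem_univ _) h

lemma Jmat_det_unit (R : Type*) [CommRing R] (n : ℕ) (hn : 1 ≤ n) :
    IsUnit (Jmat R n).det := by
  apply IsUnit.of_mul_eq_one (Jmat R n).det
  rw [← det_mul, Jmat_mul_Jmat R n hn]
  have h1 : (-1 : Matrix (Fin (2*n)) (Fin (2*n)) R) = -(1:Matrix (Fin (2*n)) (Fin (2*n)) R) := rfl
  rw [h1, det_neg, det_one, Fintype.card_fin, mul_one, Even.neg_one_pow (even_two_mul n)]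

lemma det_unit_of_eq {R : Type*} [CommRing R] {n : ℕ} (hn : 1 ≤ n)
    (g : Matrix (Fin (2*n)) (Fin (2*n)) R) (h : g * Jmat R n * gᵀ = Jmat R n) :
    IsUnit g.det := by
  apply IsUnit.of_mul_eq_one g.det
  have hdet := congrArg Matrix.det h
  rw [det_mul, det_mul, det_transpose] at hdet
  have hJ := Jmat_det_unit R n hn
  have h2 : (g.det * g.det) * (Jmat R n).det = 1 * (Jmat R n).det := by
    rw [one_mul]; linear_combination hdet
  exact hJ.mul_right_cancel h2

lemma step {n : ℕ} (hn : 1 ≤ n) {O : Type*} [CommRing O] [IsDomain O]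
    (ϖ : O) (hϖ0 : ϖ ≠ 0) (h2 : IsUnit (2:O)) (k : ℕ) (hk : 1 ≤ k)
    (g : Matrix (Fin (2*n)) (Fin (2*n)) O)
    (hg : ∀ i j, (g * Jmat O n * gᵀ - Jmat O n) i j ∈ Ideal.span {ϖ^k}) :
    ∃ g', (∀ i j, (g' - g) i j ∈ Ideal.span {ϖ^k}) ∧
      (∀ i j, (g' * Jmat O n * g'ᵀ - Jmat O n) i j ∈ Ideal.span {ϖ^(k+1)}) := by
  set J := Jmat O n with hJ
  set a := ϖ^k with ha
  have hdvd : ∀ i j, a ∣ (g*J*gᵀ - J) i j :=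
    fun i j => Ideal.mem_span_singleton.1 (hg i j)
  choose F0 hF0 using hdvd
  set F : Matrix (Fin (2*n)) (Fin (2*n)) O := Matrix.of F0 with hFdef
  have hF : g * J * gᵀ = J + a • F := by
    ext i j
    have := hF0 i j
    simp only [Matrix.sub_apply] at this
    simp only [Matrix.add_apply, Matrix.smul_apply, smul_eq_mul, hFdef, of_apply]
    linear_combination this
  have hJT : Jᵀ = -J := Jmat_transpose O n hn
  have hJJ : J * J = -1 := Jmat_mul_Jmat O n hn
  have hFT : Fᵀ = -F := by
    have h1 : (g * J * gᵀ)ᵀ = -(g * J * gᵀ) := by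
      rw [transpose_mul, transpose_mul, transpose_transpose, hJT]
      simp [mul_assoc]
    rw [hF] at h1
    have h2' : (J + a • F)ᵀ = -J + a • Fᵀ := by
      rw [transpose_add, transpose_smul, hJT]
    rw [h2'] at h1
    have h3 : a • Fᵀ + a • F = 0 := by
      have h4 : -J + a • Fᵀ - (-(J + a • F)) = a • Fᵀ + a • F := by abel
      rw [h1, sub_self] at h4
      exact h4.symm
    ext i j
    have h5 : a * (Fᵀ i j + F i j) = 0 := by
      have h6 := congrFun (congrFun h3 i) j
      simp only [Matrix.add_apply, Matrix.smul_apply, smul_eq_mul, Matrix.zero_apply] at h6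
      linear_combination h6
    have ha0 : a ≠ 0 := pow_ne_zero _ hϖ0
    have h7 := (mul_eq_zero.1 h5).resolve_left ha0
    simp only [Matrix.neg_apply]
    linear_combination h7
  set c : O := ↑h2.unit⁻¹ with hc
  have hc2 : 2 * c = 1 := by
    rw [hc]
    exact h2.mul_val_inv
  set Z : Matrix (Fin (2*n)) (Fin (2*n)) O := c • (F * J) with hZdef
  have hZT : Zᵀ = c • (J * F) := by
    rw [hZdef, transpose_smul, transpose_mul, hJT, hFT]
    simp [neg_mul, mul_neg]
  have e1 : Z * J = -(c • F) := by
    rw [hZdef, smul_mul_assoc, mul_assoc, hJJ, mul_neg_one, smul_neg]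
  have e2 : J * Zᵀ = -(c • F) := by
    rw [hZT, mul_smul_comm, ← mul_assoc, hJJ, neg_one_mul, smul_neg]
  have hsum : c • F + c • F = F := by
    rw [← add_smul]
    have : c + c = 1 := by rw [← hc2]; ring
    rw [this, one_smul]
  have hZJ : Z * J + J * Zᵀ + F = 0 := by
    rw [e1, e2]
    have h8 : -(c • F) + -(c • F) + F = F - (c • F + c • F) := by abel
    rw [h8, hsum, sub_self]
  refine ⟨(1 + a • Z) * g, ?_, ?_⟩
  · intro i j
    have h9 : (1 + a • Z) * g - g = a • (Z * g) := by
      rw [add_mul, one_mul, smul_mul_assoc]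
      abel
    rw [h9]
    exact Ideal.mem_span_singleton.2 ⟨(Z * g) i j, by simp [Matrix.smul_apply]⟩
  · intro i j
    have ht : ((1 + a • Z) * g)ᵀ = gᵀ * (1 + a • Zᵀ) := by
      rw [transpose_mul, transpose_add, transpose_smul, transpose_one]
    have key : (1 + a • Z) * g * J * ((1 + a • Z) * g)ᵀ
        = J + (a*a) • (Z*F + F*Zᵀ + Z*(J*Zᵀ)) + (a*(a*a)) • (Z*(F*Zᵀ)) := by
      rw [ht]
      have assoc1 : (1 + a • Z) * g * J * (gᵀ * (1 + a • Zᵀ))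
          = (1 + a • Z) * (g * J * gᵀ) * (1 + a • Zᵀ) := by
        simp only [mul_assoc]
      rw [assoc1, hF]
      have expand : (1 + a • Z) * (J + a • F) * (1 + a • Zᵀ)
          = J + a • (Z*J + J*Zᵀ + F) + (a*a) • (Z*F + F*Zᵀ + Z*(J*Zᵀ)) + (a*(a*a)) • (Z*(F*Zᵀ)) := by
        simp only [mul_add, add_mul, mul_one, one_mul, smul_mul_assoc, mul_smul_comm,
          smul_add, smul_smul, mul_assoc]
        module
      rw [expand, hZJ, smul_zero, add_zero]
    have hD : (1 + a • Z) * g * J * ((1 + a • Z) * g)ᵀ - J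
        = (a*a) • (Z*F + F*Zᵀ + Z*(J*Zᵀ)) + (a*(a*a)) • (Z*(F*Zᵀ)) := by
      rw [key]; abel
    rw [hD]
    have hdd : ϖ^(k+1) ∣ a * a := by
      rw [ha, ← pow_add]
      exact pow_dvd_pow ϖ (by omega)
    refine Ideal.mem_span_singleton.2 ?_
    simp only [Matrix.add_apply, Matrix.smul_apply, smul_eq_mul]
    exact dvd_add (hdd.mul_right _) (by
      have : a*(a*a) = a*a*a := by ring
      rw [this]
      exact ((hdd.mul_right a).mul_right _))

lemma two_unit {O : Type*} [CommRing O] [IsDomain O] [IsDiscreteValuationRing O]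
    (ϖ : O) (hϖ : Irreducible ϖ) [Finite (O ⧸ Ideal.span {ϖ})] (q : ℕ)
    (hq : Nat.card (O ⧸ Ideal.span {ϖ}) = q) (hodd : Odd q) : IsUnit (2 : O) := by
  rw [← IsLocalRing.notMem_maximalIdeal, hϖ.maximalIdeal_eq]
  intro h2
  have hne : Ideal.span {ϖ} ≠ ⊤ := by
    simpa [Ideal.span_singleton_eq_top] using hϖ.not_isUnit
  have : Nontrivial (O ⧸ Ideal.span {ϖ}) := Ideal.Quotient.nontrivial_iff.mpr hne
  have h20 : (2 : O ⧸ Ideal.span {ϖ}) = 0 := by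
    have : Ideal.Quotient.mk (Ideal.span {ϖ}) 2 = 0 := Ideal.Quotient.eq_zero_iff_mem.2 h2
    exact (map_ofNat (Ideal.Quotient.mk (Ideal.span {ϖ})) 2).symm.trans this
  have hord : addOrderOf (1 : O ⧸ Ideal.span {ϖ}) = 2 := by
    have : Fact (Nat.Prime 2) := ⟨Nat.prime_two⟩
    apply addOrderOf_eq_prime
    · rw [two_nsmul, ← two_mul, mul_one]; exact h20
    · exact one_ne_zero
  have hdvd : (2 : ℕ) ∣ q := by
    rw [← hq, ← hord]; exact addOrderOf_dvd_natCard _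
  rw [Nat.odd_iff] at hodd
  omega

-- helper: entrywise ideal membership is stable under matrix multiplication

-- helper: entrywise ideal membership is stable under matrix multiplication

-- helper: entrywise ideal membership is stable under matrix multiplication

lemma matMem_mul_left {n : ℕ} {O : Type*} [CommRing O] (I : Ideal O)
    {A : Matrix (Fin n) (Fin n) O} (B : Matrix (Fin n) (Fin n) O)
    (h : ∀ i j, A i j ∈ I) : ∀ i j, (A * B) i j ∈ I := by
  intro i j
  rw [mul_apply]
  exact Ideal.sum_mem _ fun t _ => I.mul_mem_right _ (h _ _)

lemma matMem_mul_right {n : ℕ} {O : Type*} [CommRing O] (I : Ideal O)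
    (A : Matrix (Fin n) (Fin n) O) {B : Matrix (Fin n) (Fin n) O}
    (h : ∀ i j, B i j ∈ I) : ∀ i j, (A * B) i j ∈ I := by
  intro i j
  rw [mul_apply]
  exact Ideal.sum_mem _ fun t _ => I.mul_mem_left _ (h _ _)

lemma lift_lemma {n : ℕ} (hn : 1 ≤ n) {O : Type*} [CommRing O] [IsDomain O]
    (ϖ : O) (hϖ0 : ϖ ≠ 0) (h2 : IsUnit (2:O)) [IsAdicComplete (Ideal.span {ϖ}) O]
    (r : ℕ) (hr : 1 ≤ r) (g0 : Matrix (Fin (2*n)) (Fin (2*n)) O)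
    (hg0 : ∀ i j, (g0 * Jmat O n * g0ᵀ - Jmat O n) i j ∈ Ideal.span {ϖ^r}) :
    ∃ G : Matrix (Fin (2*n)) (Fin (2*n)) O,
      (G * Jmat O n * Gᵀ = Jmat O n) ∧ (∀ i j, (G - g0) i j ∈ Ideal.span {ϖ^r}) := by
  set J := Jmat O n with hJ
  have hmono : ∀ {a b : ℕ}, a ≤ b → Ideal.span {ϖ^b} ≤ Ideal.span {ϖ^a} :=
    fun h => Ideal.span_singleton_le_span_singleton.mpr (pow_dvd_pow ϖ h)
  have hpow : ∀ m : ℕ, (Ideal.span {ϖ})^m = Ideal.span {ϖ^m} := fun m =>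
    Ideal.span_singleton_pow ϖ m
  -- the recursive sequence
  have stepAll : ∀ k, 1 ≤ k → ∀ g : Matrix (Fin (2*n)) (Fin (2*n)) O,
      (∀ i j, (g * J * gᵀ - J) i j ∈ Ideal.span {ϖ^k}) →
      ∃ g', (∀ i j, (g' - g) i j ∈ Ideal.span {ϖ^k}) ∧
        (∀ i j, (g' * J * g'ᵀ - J) i j ∈ Ideal.span {ϖ^(k+1)}) :=
    fun k hk g hg => step hn ϖ hϖ0 h2 k hk g hg
  choose T hT1 hT2 using stepAll
  let P : ℕ → Matrix (Fin (2*n)) (Fin (2*n)) O → Prop :=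
    fun m A => ∀ i j, (A * J * Aᵀ - J) i j ∈ Ideal.span {ϖ^(r+m)}
  let u : (m : ℕ) → {A : Matrix (Fin (2*n)) (Fin (2*n)) O // P m A} :=
    fun m => Nat.rec (motive := fun m => {A // P m A})
      ⟨g0, by simpa [P] using hg0⟩
      (fun m p => ⟨T (r+m) (by omega) p.1 p.2, by
        have := hT2 (r+m) (by omega) p.1 p.2
        simpa [P, Nat.add_assoc] using this⟩) m
  have hu0 : (u 0).1 = g0 := rfl
  have hdiff : ∀ m, ∀ i j, ((u (m+1)).1 - (u m).1) i j ∈ Ideal.span {ϖ^(r+m)} :=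
    fun m => hT1 (r+m) (by omega) (u m).1 (u m).2
  have hchain : ∀ m t, ∀ i j, ((u (m+t)).1 - (u m).1) i j ∈ Ideal.span {ϖ^(r+m)} := by
    intro m t
    induction t with
    | zero => intro i j; simp
    | succ t ih =>
      intro i j
      have e : ((u (m+(t+1))).1 - (u m).1) i j
          = ((u ((m+t)+1)).1 - (u (m+t)).1) i j + ((u (m+t)).1 - (u m).1) i j := by
        have : m + (t+1) = (m+t)+1 := by omega
        rw [this]
        simp [Matrix.sub_apply]
      rw [e]
      exact Ideal.add_mem _ (hmono (by omega) (hdiff (m+t) i j)) (ih i j)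
  -- Cauchy and limit, entrywise
  have hcauchy : ∀ i j, ∃ L : O, ∀ m : ℕ,
      (u m).1 i j ≡ L [SMOD ((Ideal.span {ϖ})^m • ⊤ : Submodule O O)] := by
    intro i j
    apply IsPrecomplete.prec (IsAdicComplete.toIsPrecomplete)
    intro m m' hmm'
    rw [SModEq.sub_mem]
    have : (Ideal.span {ϖ})^m • (⊤ : Submodule O O) = Ideal.span {ϖ^m} := by
      rw [smul_eq_mul, Ideal.mul_top, hpow]
    rw [this]
    obtain ⟨t, rfl⟩ := Nat.exists_eq_add_of_le hmm'
    have := hchain m t i j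
    have e : (u m).1 i j - (u (m+t)).1 i j = -(((u (m+t)).1 - (u m).1) i j) := by
      simp [Matrix.sub_apply]
    rw [e]
    exact neg_mem (hmono (by omega) this)
  choose Gf hGf using hcauchy
  set G : Matrix (Fin (2*n)) (Fin (2*n)) O := Matrix.of Gf with hGdef
  have hGm : ∀ m, ∀ i j, ((u m).1 - G) i j ∈ Ideal.span {ϖ^m} := by
    intro m i j
    have := hGf i j m
    rw [SModEq.sub_mem] at this
    rw [smul_eq_mul, Ideal.mul_top, hpow] at this
    simpa [Matrix.sub_apply, hGdef] using this
  refine ⟨G, ?_, ?_⟩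
  · -- the symplectic equation holds exactly
    have hGA : ∀ m, ∀ i j, (G - (u m).1) i j ∈ Ideal.span {ϖ^m} := by
      intro m i j
      have := neg_mem (hGm m i j)
      simpa [Matrix.sub_apply] using this
    have key : ∀ (m : ℕ) i j, (G * J * Gᵀ - J) i j ∈ Ideal.span {ϖ^m} := by
      intro m i j
      set A := (u m).1 with hA
      have hdec : G*J*Gᵀ - J = (G - A)*J*Gᵀ + (A*J)*(Gᵀ - Aᵀ) + (A*J*Aᵀ - J) := by
        noncomm_ring
      rw [hdec]
      simp only [Matrix.add_apply]
      refine Ideal.add_mem _ (Ideal.add_mem _ ?_ ?_) ?_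
      · exact matMem_mul_left _ _ (matMem_mul_left _ _ (hGA m)) i j
      · refine matMem_mul_right _ _ ?_ i j
        intro i' j'
        have : (Gᵀ - Aᵀ) i' j' = (G - A) j' i' := by simp [Matrix.sub_apply]
        rw [this]
        exact hGA m j' i'
      · exact hmono (by omega) ((u m).2 i j)
    have heq : G * J * Gᵀ - J = 0 := by
      ext i j
      have hhaus := IsAdicComplete.toIsHausdorff (I := Ideal.span {ϖ}) (M := O)
      refine hhaus.haus _ (fun m => ?_)
      rw [SModEq.zero, smul_eq_mul, Ideal.mul_top, hpow]
      exact key m i j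
    exact sub_eq_zero.mp heq
  · intro i j
    have e : (G - g0) i j = -(((u r).1 - G) i j) + ((u (0+r)).1 - (u 0).1) i j := by
      have : (0:ℕ)+r = r := by omega
      rw [this, hu0]
      simp [Matrix.sub_apply]
    rw [e]
    refine Ideal.add_mem _ (neg_mem (hGm r i j)) ?_
    have := hchain 0 r i j
    exact hmono (by omega) this

lemma map_eq {n : ℕ} {R S : Type*} [CommRing R] [CommRing S] (f : R →+* S)
    (g : Matrix (Fin (2*n)) (Fin (2*n)) R) :
    (g * Jmat R n * gᵀ - Jmat R n).map f
      = g.map f * Jmat S n * (g.map f)ᵀ - Jmat S n := by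
  have h := congrArg (fun M => f.mapMatrix M)
    (rfl : g * Jmat R n * gᵀ - Jmat R n = g * Jmat R n * gᵀ - Jmat R n)
  calc (g * Jmat R n * gᵀ - Jmat R n).map f
      = f.mapMatrix (g * Jmat R n * gᵀ) - f.mapMatrix (Jmat R n) := by
        rw [← map_sub]; rfl
    _ = f.mapMatrix g * f.mapMatrix (Jmat R n) * f.mapMatrix gᵀ - f.mapMatrix (Jmat R n) := by
        rw [_root_.map_mul, _root_.map_mul]
    _ = g.map f * Jmat S n * (g.map f)ᵀ - Jmat S n := by
        simp only [RingHom.mapMatrix_apply, Jmat_map f n, Matrix.transpose_map]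

lemma SpSet_map {n : ℕ} {R S : Type*} [CommRing R] [CommRing S] (f : R →+* S)
    {g : Matrix (Fin (2*n)) (Fin (2*n)) R} (hg : g ∈ SpSet n R) :
    g.map f ∈ SpSet n S := by
  obtain ⟨hdet, heq⟩ := hg
  constructor
  · rw [show g.map ⇑f = f.mapMatrix g from rfl, ← RingHom.map_det]
    exact hdet.map f
  · have := map_eq f g
    rw [heq, sub_self] at this
    rw [← sub_eq_zero, ← this]
    ext i j
    simp

lemma exists_lift0 {n : ℕ} {O : Type*} [CommRing O] (I : Ideal O)
    (gbar : Matrix (Fin (2*n)) (Fin (2*n)) (O ⧸ I)) (hbar : gbar ∈ SpSet n (O ⧸ I)) :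
    ∃ g0 : Matrix (Fin (2*n)) (Fin (2*n)) O,
      g0.map (Ideal.Quotient.mk I) = gbar ∧
      ∀ i j, (g0 * Jmat O n * g0ᵀ - Jmat O n) i j ∈ I := by
  have hsurj := Ideal.Quotient.mk_surjective (I := I)
  choose g0f hg0f using fun p : Fin (2*n) × Fin (2*n) => hsurj (gbar p.1 p.2)
  set g0 : Matrix (Fin (2*n)) (Fin (2*n)) O := Matrix.of (fun i j => g0f (i, j)) with hg0
  have hmapeq : g0.map (Ideal.Quotient.mk I) = gbar := by
    ext i j; exact hg0f (i, j)
  refine ⟨g0, hmapeq, ?_⟩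
  intro i j
  have h1 : (g0 * Jmat O n * g0ᵀ - Jmat O n).map (Ideal.Quotient.mk I) = 0 := by
    rw [map_eq, hmapeq, hbar.2, sub_self]
  have := congrFun (congrFun h1 i) j
  simp only [Matrix.map_apply, Matrix.zero_apply] at this
  exact Ideal.Quotient.eq_zero_iff_mem.1 this

/-- The reduction maps `Sp_{2n}(O) → Sp_{2n}(O/ϖ^r O)` and
`Sp_{2n}(O/ϖ^r O) → Sp_{2n}(O/ϖ^s O)` (for `r ≥ s ≥ 1`) are surjective. -/
theorem stmt10 (n : ℕ) (hn : 1 ≤ n)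
    (O : Type*) [CommRing O] [IsDomain O] [IsDiscreteValuationRing O]
    (ϖ : O) (hϖ : Irreducible ϖ) [IsAdicComplete (Ideal.span {ϖ}) O]
    [Finite (O ⧸ Ideal.span {ϖ})] (q : ℕ)
    (hq : Nat.card (O ⧸ Ideal.span {ϖ}) = q) (hodd : Odd q)
    (r s : ℕ) (hs : 1 ≤ s) (hrs : s ≤ r) :
    (∀ g ∈ SpSet n O,
      g.map (Ideal.Quotient.mk (Ideal.span {ϖ^r})) ∈ SpSet n (O ⧸ Ideal.span {ϖ^r})) ∧
    (∀ gbar ∈ SpSet n (O ⧸ Ideal.span {ϖ^r}),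
      ∃ g ∈ SpSet n O, g.map (Ideal.Quotient.mk (Ideal.span {ϖ^r})) = gbar) ∧
    (∀ g ∈ SpSet n (O ⧸ Ideal.span {ϖ^r}),
      g.map (Ideal.Quotient.factor (S := Ideal.span {ϖ^r}) (T := Ideal.span {ϖ^s})
          (Ideal.span_singleton_le_span_singleton.mpr (pow_dvd_pow ϖ hrs)))
        ∈ SpSet n (O ⧸ Ideal.span {ϖ^s})) ∧
    (∀ gbar ∈ SpSet n (O ⧸ Ideal.span {ϖ^s}),
      ∃ g ∈ SpSet n (O ⧸ Ideal.span {ϖ^r}),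
        g.map (Ideal.Quotient.factor (S := Ideal.span {ϖ^r}) (T := Ideal.span {ϖ^s})
          (Ideal.span_singleton_le_span_singleton.mpr (pow_dvd_pow ϖ hrs))) = gbar) := by
  have hϖ0 : ϖ ≠ 0 := hϖ.ne_zero
  have h2 : IsUnit (2 : O) := two_unit ϖ hϖ q hq hodd
  have hr : 1 ≤ r := le_trans hs hrs
  have main : ∀ t : ℕ, 1 ≤ t → ∀ gbar ∈ SpSet n (O ⧸ Ideal.span {ϖ^t}),
      ∃ g ∈ SpSet n O, g.map (Ideal.Quotient.mk (Ideal.span {ϖ^t})) = gbar := by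
    intro t ht gbar hbar
    obtain ⟨g0, hmap, hg0⟩ := exists_lift0 (Ideal.span {ϖ^t}) gbar hbar
    obtain ⟨G, hGeq, hGr⟩ := lift_lemma hn ϖ hϖ0 h2 t ht g0 hg0
    refine ⟨G, ⟨det_unit_of_eq hn G hGeq, hGeq⟩, ?_⟩
    rw [← hmap]
    ext i j
    simp only [Matrix.map_apply]
    rw [Ideal.Quotient.eq]
    have := hGr i j
    simpa [Matrix.sub_apply] using this
  refine ⟨fun g hg => SpSet_map _ hg, main r hr, fun g hg => SpSet_map _ hg, ?_⟩
  intro gbar hbar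
  obtain ⟨g, hgSp, hgmap⟩ := main s hs gbar hbar
  refine ⟨g.map (Ideal.Quotient.mk (Ideal.span {ϖ^r})), SpSet_map _ hgSp, ?_⟩
  rw [← hgmap]
  ext i j
  simp only [Matrix.map_apply]
  rw [Ideal.Quotient.factor_mk]
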